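/- For every n ∈ ℕ and all tuples w, p : Fin n → ℝ with w i > 0 and p i > 0 for all i, there exist κ ∈ (0,1), a tuple r : Fin n → ℝ with 0 < r i < 1 for all i, and a tuple V : Fin n → ℝ with V i ≥ 0 for all i, such that, setting θ i = 1 − κ / (κ + (1 − κ) · r i), one has θ i = e^{−p i} and w i = θ i · V i for every i ∈ Fin n. -/

import Mathlib

/-- Proposition 2 (quantitative content): any real-valued knapsack instance with
positive weights and profits can be realized by the supervisor's elimination
procedure. -/
theorem knapsack_covering
    (n : ℕ) (w p : Fin n → ℝ) (hw : ∀ i, 0 < w i) (hp : ∀ i, 0 < p i) :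
    ∃ κ : ℝ, 0 < κ ∧ κ < 1 ∧
      ∃ r : Fin n → ℝ, (∀ i, 0 < r i ∧ r i < 1) ∧
        ∃ V : Fin n → ℝ, (∀ i, 0 ≤ V i) ∧
          ∀ i, 1 - κ / (κ + (1 - κ) * r i) = Real.exp (-(p i)) ∧
            w i = (1 - κ / (κ + (1 - κ) * r i)) * V i := by
  set θ : Fin n → ℝ := fun i => Real.exp (-(p i)) with hθ
  have hθpos : ∀ i, 0 < θ i := fun i => Real.exp_pos _
  have hθlt : ∀ i, θ i < 1 := fun i =>
    Real.exp_lt_one_iff.mpr (by linarith [hp i])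
  set s : Finset ℝ := insert 1 (Finset.univ.image fun i => 1 - θ i) with hs_def
  have hs : s.Nonempty := ⟨1, Finset.mem_insert_self _ _⟩
  set m := s.min' hs with hm_def
  have hmpos : 0 < m := by
    have hmem := s.min'_mem hs
    rcases Finset.mem_insert.mp hmem with h | h
    · show (0:ℝ) < s.min' hs
      rw [h]; norm_num
    · obtain ⟨i, _, hi⟩ := Finset.mem_image.mp h
      show (0:ℝ) < s.min' hs
      rw [← hi]; linarith [hθlt i]
  have hm1 : m ≤ 1 := Finset.min'_le s 1 (Finset.mem_insert_self _ _)
  have hmθ : ∀ i, m ≤ 1 - θ i := fun i =>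
    Finset.min'_le s _ (Finset.mem_insert_of_mem
      (Finset.mem_image_of_mem _ (Finset.mem_univ i)))
  refine ⟨m / 2, by linarith, by linarith, ?_⟩
  set κ := m / 2 with hκ_def
  have hκpos : 0 < κ := by rw [hκ_def]; linarith
  have hκlt : κ < 1 := by rw [hκ_def]; linarith
  have h1κ : 0 < 1 - κ := by linarith
  refine ⟨fun i => κ * θ i / ((1 - θ i) * (1 - κ)), fun i => ?_,
    fun i => w i / θ i, fun i => le_of_lt (div_pos (hw i) (hθpos i)), fun i => ?_⟩
  · have h1θ : 0 < 1 - θ i := by linarith [hθlt i]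
    constructor
    · exact div_pos (mul_pos hκpos (hθpos i)) (mul_pos h1θ h1κ)
    · rw [div_lt_one (mul_pos h1θ h1κ)]
      have hκθ : κ ≤ (1 - θ i) / 2 := by
        have := hmθ i; rw [hκ_def]; linarith
      nlinarith [hθpos i, hθlt i]
  · have h1θ : 0 < 1 - θ i := by linarith [hθlt i]
    have hkey : κ + (1 - κ) * (κ * θ i / ((1 - θ i) * (1 - κ))) = κ / (1 - θ i) := by
      field_simp
      ring
    rw [hkey]
    have hθeq : 1 - κ / (κ / (1 - θ i)) = θ i := by
      rw [div_div_eq_mul_div]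
      field_simp
      ring
    constructor
    · exact hθeq
    · rw [hθeq, mul_div_cancel₀ _ (ne_of_gt (hθpos i))]
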